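/- arXiv:2009.11723 — 3 statements merged into one kernel-verified Lean document; each statement's English description precedes it below -/
import Mathlib

section
/- Every symmetric traceless 3×3 real matrix D can be written as D = a⌊n₁⊗n₂⌋ for some a ≥ 0 and unit vectors n₁, n₂ ∈ ℝ³, where ⌊n₁⊗n₂⌋ = (1/2)(n₁⊗n₂ + n₂⊗n₁) − (1/3)(n₁·n₂)I. -/
open Finset Matrix

/-- The symmetric traceless part `⌊n₁⊗n₂⌋ = (1/2)(n₁⊗n₂ + n₂⊗n₁) − (1/3)(n₁·n₂)I`. -/
noncomputable def devOuter (n m : Fin 3 → ℝ) : Matrix (Fin 3) (Fin 3) ℝ :=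
  (1 / 2 : ℝ) • (Matrix.vecMulVec n m + Matrix.vecMulVec m n) -
    ((1 / 3 : ℝ) * (∑ i, n i * m i)) • (1 : Matrix (Fin 3) (Fin 3) ℝ)

/-- Maxwell's multipole representation of a second-order deviator: every symmetric traceless
`3×3` real matrix `D` equals `a⌊n₁⊗n₂⌋` for some `a ≥ 0` and unit vectors `n₁, n₂`. -/
theorem multipole_representation_order2 (D : Matrix (Fin 3) (Fin 3) ℝ)
    (hsym : D.IsSymm) (htr : Matrix.trace D = 0) :
    ∃ (a : ℝ) (n₁ n₂ : Fin 3 → ℝ), 0 ≤ a ∧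
      (∑ i, n₁ i ^ 2 = 1) ∧ (∑ i, n₂ i ^ 2 = 1) ∧
      D = a • devOuter n₁ n₂ := by
  have hA : D.IsHermitian := by
    rw [Matrix.IsHermitian, Matrix.conjTranspose_eq_transpose_of_trivial]; exact hsym
  set B : Fin 3 → Fin 3 → ℝ := fun i => ⇑(hA.eigenvectorBasis i) with hB
  set ev := hA.eigenvalues with hev
  have hUU : (hA.eigenvectorUnitary : Matrix (Fin 3) (Fin 3) ℝ) *
      star (hA.eigenvectorUnitary : Matrix (Fin 3) (Fin 3) ℝ) = 1 :=
    (Matrix.mem_unitaryGroup_iff).mp (hA.eigenvectorUnitary).2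
  have hcomp : ∀ j k, ∑ i, B i j * B i k = (1 : Matrix (Fin 3) (Fin 3) ℝ) j k := by
    intro j k
    have := congrFun (congrFun hUU j) k
    simpa [Matrix.mul_apply, Matrix.star_apply] using this
  have hUU' : star (hA.eigenvectorUnitary : Matrix (Fin 3) (Fin 3) ℝ) *
      (hA.eigenvectorUnitary : Matrix (Fin 3) (Fin 3) ℝ) = 1 :=
    (Matrix.mem_unitaryGroup_iff').mp (hA.eigenvectorUnitary).2
  have horthon : ∀ i l, ∑ j, B i j * B l j = (1 : Matrix (Fin 3) (Fin 3) ℝ) i l := by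
    intro i l
    have := congrFun (congrFun hUU' i) l
    simpa [Matrix.mul_apply, Matrix.star_apply, mul_comm] using this
  have hDsum : ∀ j k, D j k = ∑ i, ev i * (B i j * B i k) := by
    intro j k
    conv_lhs => rw [hA.spectral_theorem]
    simp [Matrix.mul_apply, Matrix.star_apply, Finset.mul_sum, Matrix.diagonal_apply]
    exact Finset.sum_congr rfl fun i _ => by simp [hB, hev]; ring
  -- trace = sum of eigenvalues
  have htrsum : ∑ i, ev i = 0 := by
    have h1 : Matrix.trace D = ∑ i, ev i := by
      rw [Matrix.trace]
      calc ∑ j, D.diag j = ∑ j, ∑ i, ev i * (B i j * B i j) :=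
            Finset.sum_congr rfl fun j _ => hDsum j j
        _ = ∑ i, ∑ j, ev i * (B i j * B i j) := Finset.sum_comm
        _ = ∑ i, ev i * ∑ j, B i j * B i j := by
            exact Finset.sum_congr rfl fun i _ => (Finset.mul_sum _ _ _).symm
        _ = ∑ i, ev i := by
            refine Finset.sum_congr rfl fun i _ => ?_
            rw [horthon i i, Matrix.one_apply_eq, mul_one]
    rw [← h1, htr]
  -- sorting
  set σ := Tuple.sort ev with hσ
  set μ : Fin 3 → ℝ := fun i => ev (σ i) with hμ
  have hmono : Monotone (ev ∘ σ) := Tuple.monotone_sort ev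
  have h01 : μ 0 ≤ μ 1 := hmono (by decide : (0 : Fin 3) ≤ 1)
  have h12 : μ 1 ≤ μ 2 := hmono (by decide : (1 : Fin 3) ≤ 2)
  have hμsum : μ 0 + μ 1 + μ 2 = 0 := by
    have h2 : ∑ i, ev (σ i) = ∑ i, ev i := Equiv.sum_comp σ ev
    rw [htrsum, Fin.sum_univ_three] at h2
    exact h2
  have hC : (0:ℝ) ≤ μ 2 - μ 1 := by linarith
  have hS : (0:ℝ) ≤ 2 * μ 1 + μ 2 := by linarith
  by_cases haz : μ 1 + 2 * μ 2 = 0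
  · -- all eigenvalues vanish, D = 0
    have hμ2 : μ 2 = 0 := by linarith
    have hμ1 : μ 1 = 0 := by linarith
    have hμ0 : μ 0 = 0 := by linarith
    have hevz : ∀ i, ev i = 0 := by
      intro i
      have : ev (σ (σ.symm i)) = 0 := by
        have : ∀ j : Fin 3, μ j = 0 := by
          intro j; fin_cases j <;> assumption
        exact this (σ.symm i)
      simpa using this
    have hD0 : D = 0 := by
      ext j k
      rw [hDsum j k]
      simp [hevz]
    refine ⟨0, ![1,0,0], ![1,0,0], le_refl 0, by simp [Fin.sum_univ_three],
      by simp [Fin.sum_univ_three], by rw [zero_smul, hD0]⟩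
  · set a : ℝ := μ 1 + 2 * μ 2 with ha
    have hapos : 0 < a := lt_of_le_of_ne (by linarith) (Ne.symm haz)
    set c : ℝ := Real.sqrt ((μ 2 - μ 1) / a) with hc
    set s : ℝ := Real.sqrt ((2 * μ 1 + μ 2) / a) with hs
    have hc2 : c ^ 2 = (μ 2 - μ 1) / a := Real.sq_sqrt (div_nonneg hC hapos.le)
    have hs2 : s ^ 2 = (2 * μ 1 + μ 2) / a := Real.sq_sqrt (div_nonneg hS hapos.le)
    have hac2 : a * c ^ 2 = μ 2 - μ 1 := by rw [hc2]; field_simp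
    have has2 : a * s ^ 2 = 2 * μ 1 + μ 2 := by rw [hs2]; field_simp
    set n₁ : Fin 3 → ℝ := fun j => c * B (σ 2) j + s * B (σ 0) j with hn₁
    set n₂ : Fin 3 → ℝ := fun j => c * B (σ 2) j - s * B (σ 0) j with hn₂
    have hB22 : ∑ j, B (σ 2) j * B (σ 2) j = 1 := by
      rw [horthon, Matrix.one_apply_eq]
    have hB00 : ∑ j, B (σ 0) j * B (σ 0) j = 1 := by
      rw [horthon, Matrix.one_apply_eq]
    have hB02 : ∑ j, B (σ 0) j * B (σ 2) j = 0 := by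
      rw [horthon, Matrix.one_apply_ne (σ.injective.ne (by decide : (0:Fin 3) ≠ 2))]
    have hcs1 : c ^ 2 + s ^ 2 = 1 := by
      rw [hc2, hs2]; field_simp; ring
    have hnorm1 : ∑ i, n₁ i ^ 2 = 1 := by
      have : ∑ i, n₁ i ^ 2 = c ^ 2 * ∑ j, B (σ 2) j * B (σ 2) j
          + (2 * c * s) * ∑ j, B (σ 0) j * B (σ 2) j
          + s ^ 2 * ∑ j, B (σ 0) j * B (σ 0) j := by
        rw [Finset.mul_sum, Finset.mul_sum, Finset.mul_sum, ← Finset.sum_add_distrib,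
          ← Finset.sum_add_distrib]
        exact Finset.sum_congr rfl fun i _ => by simp [hn₁]; ring
      rw [this, hB22, hB00, hB02]
      linarith [hcs1]
    have hnorm2 : ∑ i, n₂ i ^ 2 = 1 := by
      have : ∑ i, n₂ i ^ 2 = c ^ 2 * ∑ j, B (σ 2) j * B (σ 2) j
          + (-2 * c * s) * ∑ j, B (σ 0) j * B (σ 2) j
          + s ^ 2 * ∑ j, B (σ 0) j * B (σ 0) j := by
        rw [Finset.mul_sum, Finset.mul_sum, Finset.mul_sum, ← Finset.sum_add_distrib,
          ← Finset.sum_add_distrib]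
        exact Finset.sum_congr rfl fun i _ => by simp [hn₂]; ring
      rw [this, hB22, hB00, hB02]
      linarith [hcs1]
    have hdot : ∑ i, n₁ i * n₂ i = c ^ 2 - s ^ 2 := by
      have : ∑ i, n₁ i * n₂ i = c ^ 2 * ∑ j, B (σ 2) j * B (σ 2) j
          - s ^ 2 * ∑ j, B (σ 0) j * B (σ 0) j := by
        rw [Finset.mul_sum, Finset.mul_sum, ← Finset.sum_sub_distrib]
        exact Finset.sum_congr rfl fun i _ => by simp [hn₁, hn₂]; ring
      rw [this, hB22, hB00]; ring
    refine ⟨a, n₁, n₂, hapos.le, hnorm1, hnorm2, ?_⟩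
    ext j k
    rw [hDsum j k]
    have hre : ∑ i, ev i * (B i j * B i k) = ∑ i, μ i * (B (σ i) j * B (σ i) k) :=
      (Equiv.sum_comp σ (fun i => ev i * (B i j * B i k))).symm
    have hδ : (1 : Matrix (Fin 3) (Fin 3) ℝ) j k = ∑ i, B (σ i) j * B (σ i) k := by
      rw [← hcomp j k]
      exact (Equiv.sum_comp σ (fun i => B i j * B i k)).symm
    rw [hre]
    simp only [devOuter, Matrix.smul_apply, Matrix.sub_apply, Matrix.add_apply,
      Matrix.vecMulVec_apply, smul_eq_mul]
    rw [hdot, hδ]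
    simp only [Fin.sum_univ_three, hn₁, hn₂]
    have hμ0 : μ 0 = -μ 1 - μ 2 := by linarith
    set x0 := B (σ 0) j; set y0 := B (σ 0) k
    set x1 := B (σ 1) j; set y1 := B (σ 1) k
    set x2 := B (σ 2) j; set y2 := B (σ 2) k
    linear_combination (x0*y0) * hμsum
      - (x2*y2 - (x0*y0 + x1*y1 + x2*y2)/3) * hac2
      - (-(x0*y0) + (x0*y0 + x1*y1 + x2*y2)/3) * has2
end

section
/- In the multipole representation D = a⌊n₁⊗n₂⌋ of a nonzero symmetric traceless 3×3 matrix D, the scalar a > 0 is unique, and the pair of unit vectors {n₁, n₂} is unique up to swapping and up to an even number of sign changes (i.e., {n₁,n₂}, {−n₁,−n₂} give the same D). -/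
open Finset Matrix

set_option maxHeartbeats 1000000

private lemma sq3 {p q r : ℝ} (h : p ^ 2 + q ^ 2 + r ^ 2 = 0) : p = 0 ∧ q = 0 ∧ r = 0 := by
  have hp : p ^ 2 = 0 := le_antisymm (by nlinarith [sq_nonneg q, sq_nonneg r]) (sq_nonneg p)
  have hq : q ^ 2 = 0 := le_antisymm (by nlinarith [sq_nonneg p, sq_nonneg r]) (sq_nonneg q)
  have hr : r ^ 2 = 0 := le_antisymm (by nlinarith [sq_nonneg p, sq_nonneg q]) (sq_nonneg r)
  exact ⟨pow_eq_zero_iff (by norm_num : (2:ℕ) ≠ 0) |>.mp hp,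
    pow_eq_zero_iff (by norm_num : (2:ℕ) ≠ 0) |>.mp hq,
    pow_eq_zero_iff (by norm_num : (2:ℕ) ≠ 0) |>.mp hr⟩

private lemma inj_aux (a b c d : ℝ) (ha : 0 < a) (hb : 0 < b) (hc : c^2 ≤ 1) (hd : d^2 ≤ 1)
    (hP : a^2*(3 + c^2) = b^2*(3 + d^2)) (hQ : a^3*(9*c - c^3) = b^3*(9*d - d^3)) :
    a = b ∧ c = d := by
  have hQ2 : a^6*(9*c - c^3)^2 = b^6*(9*d - d^3)^2 := by
    linear_combination (a^3*(9*c - c^3) + b^3*(9*d - d^3)) * hQ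
  have hP3 : a^6*(3 + c^2)^3 = b^6*(3 + d^2)^3 := by
    linear_combination (a^4*(3+c^2)^2 + a^2*b^2*(3+c^2)*(3+d^2) + b^4*(3+d^2)^2) * hP
  have hF : a^6 * (c^2*(9 - c^2)^2*(3 + d^2)^3 - d^2*(9 - d^2)^2*(3 + c^2)^3) = 0 := by
    linear_combination (3+d^2)^3 * hQ2 - (9*d - d^3)^2 * hP3
  have ha6 : a^6 ≠ 0 := by positivity
  have hG : c^2*(9 - c^2)^2*(3 + d^2)^3 = d^2*(9 - d^2)^2*(3 + c^2)^3 := by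
    have h0 := (mul_eq_zero.mp hF).resolve_left ha6
    linarith
  have hle : ∀ s t : ℝ, s ≤ 1 → 0 ≤ t → t ≤ 1 →
      s*(9-s)^2*(3+t)^3 = t*(9-t)^2*(3+s)^3 → s ≤ t := by
    intro s t hs1 ht0 ht1 hGe
    by_contra hcon
    push_neg at hcon
    have e1 : (0:ℝ) ≤ s^2*(1-t)^2 := by positivity
    have e2 : (0:ℝ) ≤ (1-s)*(18 + 44*t + 2*t^2) := by
      apply mul_nonneg (by linarith)
      nlinarith [sq_nonneg t]
    have e3 : (0:ℝ) < (1-t)*(63+t) := by nlinarith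
    have key : (0:ℝ) < (s - t)*27*(s^2*(1-t)^2 + (1-s)*(18+44*t+2*t^2) + (1-t)*(63+t)) := by
      have hst : (0:ℝ) < (s - t)*27 := by linarith
      have hbr : (0:ℝ) < s^2*(1-t)^2 + (1-s)*(18+44*t+2*t^2) + (1-t)*(63+t) := by linarith
      exact mul_pos hst hbr
    have hzero : (s - t)*27*(s^2*(1-t)^2 + (1-s)*(18+44*t+2*t^2) + (1-t)*(63+t)) = 0 := by
      linear_combination hGe
    linarith
  have hcd2 : c^2 = d^2 :=
    le_antisymm (hle (c^2) (d^2) hc (sq_nonneg d) hd hG) (hle (d^2) (c^2) hd (sq_nonneg c) hc hG.symm)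
  have hsum : (c - d)*(c + d) = 0 := by linear_combination hcd2
  have hab : ∀ e : ℝ, c = e → d = e → a = b := by
    intro e hce hde
    have h0 : (a - b)*((a + b)*(3 + c^2)) = 0 := by
      linear_combination hP - b^2*(c + d)*(by linear_combination hce - hde : c - d = 0)
    have h1 : (0:ℝ) < (a + b)*(3 + c^2) := by nlinarith [sq_nonneg c]
    have h2 := (mul_eq_zero.mp h0).resolve_right (ne_of_gt h1)
    linarith
  rcases mul_eq_zero.mp hsum with h | h
  · have hcd : c = d := by linarith
    exact ⟨hab d hcd rfl, hcd⟩
  · have h9 : (a^3 + b^3)*(9*c - c^3) = 0 := by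
      linear_combination hQ + b^3*(9 - (c^2 - c*d + d^2)) * h
    have hab3 : (0:ℝ) < a^3 + b^3 := by positivity
    have hc9 : 9*c - c^3 = 0 := (mul_eq_zero.mp h9).resolve_left (ne_of_gt hab3)
    have hc90 : c * (9 - c^2) = 0 := by linear_combination hc9
    have hc0 : c = 0 := by
      rcases mul_eq_zero.mp hc90 with h0 | h0
      · exact h0
      · nlinarith
    have hd0 : d = 0 := by linarith
    have hcd : c = d := by rw [hc0, hd0]
    exact ⟨hab 0 hc0 hd0, hcd⟩

private lemma key (a b x0 x1 x2 y0 y1 y2 u0 u1 u2 v0 v1 v2 : ℝ)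
    (ha : 0 < a) (hb : 0 < b)
    (hx : x0^2 + x1^2 + x2^2 = 1) (hy : y0^2 + y1^2 + y2^2 = 1)
    (hu : u0^2 + u1^2 + u2^2 = 1) (hv : v0^2 + v1^2 + v2^2 = 1)
    (h00 : a * (x0*y0 - (x0*y0 + x1*y1 + x2*y2)/3) = b * (u0*v0 - (u0*v0 + u1*v1 + u2*v2)/3))
    (h11 : a * (x1*y1 - (x0*y0 + x1*y1 + x2*y2)/3) = b * (u1*v1 - (u0*v0 + u1*v1 + u2*v2)/3))
    (h22 : a * (x2*y2 - (x0*y0 + x1*y1 + x2*y2)/3) = b * (u2*v2 - (u0*v0 + u1*v1 + u2*v2)/3))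
    (h01 : a * (x0*y1 + x1*y0) = b * (u0*v1 + u1*v0))
    (h02 : a * (x0*y2 + x2*y0) = b * (u0*v2 + u2*v0))
    (h12 : a * (x1*y2 + x2*y1) = b * (u1*v2 + u2*v1)) :
    a = b ∧ ((u0 = x0 ∧ u1 = x1 ∧ u2 = x2 ∧ v0 = y0 ∧ v1 = y1 ∧ v2 = y2) ∨
             (u0 = y0 ∧ u1 = y1 ∧ u2 = y2 ∧ v0 = x0 ∧ v1 = x1 ∧ v2 = x2) ∨
             (u0 = -x0 ∧ u1 = -x1 ∧ u2 = -x2 ∧ v0 = -y0 ∧ v1 = -y1 ∧ v2 = -y2) ∨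
             (u0 = -y0 ∧ u1 = -y1 ∧ u2 = -y2 ∧ v0 = -x0 ∧ v1 = -x1 ∧ v2 = -x2)) := by
  have hXY : (x0^2+x1^2+x2^2)*(y0^2+y1^2+y2^2) = 1 := by rw [hx, hy]; norm_num
  have hUV : (u0^2+u1^2+u2^2)*(v0^2+v1^2+v2^2) = 1 := by rw [hu, hv]; norm_num
  have hc2 : (x0*y0 + x1*y1 + x2*y2)^2 ≤ 1 := by
    nlinarith [sq_nonneg (x0*y1 - x1*y0), sq_nonneg (x0*y2 - x2*y0), sq_nonneg (x1*y2 - x2*y1), hXY]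
  have hcp2 : (u0*v0 + u1*v1 + u2*v2)^2 ≤ 1 := by
    nlinarith [sq_nonneg (u0*v1 - u1*v0), sq_nonneg (u0*v2 - u2*v0), sq_nonneg (u1*v2 - u2*v1), hUV]
  have hP : a^2*(3 + (x0*y0 + x1*y1 + x2*y2)^2) = b^2*(3 + (u0*v0 + u1*v1 + u2*v2)^2) := by
    linear_combination (-2*b*u2*v2 + -2*b*u1*v1 + 4*b*u0*v0 + -2*a*x2*y2 + -2*a*x1*y1 + 4*a*x0*y0) * h00 + (3*b*u1*v0 + 3*b*u0*v1 + 3*a*x1*y0 + 3*a*x0*y1) * h01 + (3*b*u2*v0 + 3*b*u0*v2 + 3*a*x2*y0 + 3*a*x0*y2) * h02 + (-2*b*u2*v2 + 4*b*u1*v1 + -2*b*u0*v0 + -2*a*x2*y2 + 4*a*x1*y1 + -2*a*x0*y0) * h11 + (3*b*u2*v1 + 3*b*u1*v2 + 3*a*x2*y1 + 3*a*x1*y2) * h12 + (4*b*u2*v2 + -2*b*u1*v1 + -2*b*u0*v0 + 4*a*x2*y2 + -2*a*x1*y1 + -2*a*x0*y0) * h22 + (-3*a^2*y2^2 + -3*a^2*y1^2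 + -3*a^2*y0^2) * hx + (-3*a^2) * hy + (3*b^2*v2^2 + 3*b^2*v1^2 + 3*b^2*v0^2) * hu + (3*b^2) * hv
  have hQ : a^3*(9*(x0*y0 + x1*y1 + x2*y2) - (x0*y0 + x1*y1 + x2*y2)^3) = b^3*(9*(u0*v0 + u1*v1 + u2*v2) - (u0*v0 + u1*v1 + u2*v2)^3) := by
    linear_combination (-24*a^2*x2^2*y2^2 + -27*a^2*x2^2*y1^2 + 6*a^2*x1*x2*y1*y2 + -27*a^2*x1^2*y2^2 + -24*a^2*x1^2*y1^2 + -12*a^2*x0*x2*y0*y2 + -12*a^2*x0*x1*y0*y1 + 12*a^2*x0^2*y0^2) * h00 + (-18*a*b*x2*y2*u1*v0 + -18*a*b*x2*y2*u0*v1 + 9*a*b*x1*y1*u1*v0 + 9*a*b*x1*y1*u0*v1 + 9*a*b*x0*y0*u1*v0 + 9*a*b*x0*y0*u0*v1 + 27*a^2*x2^2*y0*y1 + 9*a^2*x1*x2*y0*y2 + 9*a^2*x1^2*y0*y1 + 9*a^2*x0*x2*y1*y2 + 27*a^2*x0*x1*y2^2 + 9*a^2*x0*x1*y1^2 + 9*a^2*x0*x1*y0^2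 + 9*a^2*x0^2*y0*y1) * h01 + (9*a*b*x2*y2*u2*v0 + 9*a*b*x2*y2*u0*v2 + 27*a*b*x2*y1*u1*v0 + 27*a*b*x2*y1*u0*v1 + 27*a*b*x1*y2*u1*v0 + 27*a*b*x1*y2*u0*v1 + -18*a*b*x1*y1*u2*v0 + -18*a*b*x1*y1*u0*v2 + 9*a*b*x0*y0*u2*v0 + 9*a*b*x0*y0*u0*v2 + 9*a^2*x2^2*y0*y2 + -18*a^2*x1*x2*y0*y1 + 9*a^2*x0*x2*y2^2 + 9*a^2*x0*x2*y0^2 + -18*a^2*x0*x1*y1*y2 + 9*a^2*x0^2*y0*y2) * h02 + (-27*b^2*u2^2*v0^2 + -54*b^2*u0*u2*v0*v2 + -27*b^2*u0^2*v2^2 + -24*a*b*x2*y2*u2*v2 + -24*a*b*x2*y2*u1*v1 + 48*a*b*x2*y2*u0*v0 + 12*a*b*x1*y1*u2*v2 + 12*a*b*x1*y1*u1*v1 + -24*a*b*x1*y1*u0*v0 + 12*a*b*x0*y0*u2*v2 + 12*a*b*x0*y0*u1*v1 + -24*a*b*x0*y0*u0*v0) * h11 + (9*b^2*u2^2*v1*v2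 + 9*b^2*u1*u2*v2^2 + 9*b^2*u1*u2*v1^2 + 27*b^2*u1*u2*v0^2 + 9*b^2*u1^2*v1*v2 + 9*b^2*u0*u2*v0*v1 + 9*b^2*u0*u1*v0*v2 + 27*b^2*u0^2*v1*v2 + 9*a*b*x2*y1*u2*v2 + 9*a*b*x2*y1*u1*v1 + -18*a*b*x2*y1*u0*v0 + 9*a*b*x1*y2*u2*v2 + 9*a*b*x1*y2*u1*v1 + -18*a*b*x1*y2*u0*v0) * h12 + (12*b^2*u2^2*v2^2 + -12*b^2*u1*u2*v1*v2 + -24*b^2*u1^2*v1^2 + -27*b^2*u1^2*v0^2 + -12*b^2*u0*u2*v0*v2 + 6*b^2*u0*u1*v0*v1 + -27*b^2*u0^2*v1^2 + -24*b^2*u0^2*v0^2) * h22 + (-9*a^3*x2*y2^3 + -9*a^3*x2*y1^2*y2 + -9*a^3*x2*y0^2*y2 + -9*a^3*x1*y1*y2^2 + -9*a^3*x1*y1^3 + -9*a^3*x1*y0^2*y1 + -9*a^3*x0*y0*y2^2 + -9*a^3*x0*y0*y1^2 + -9*a^3*x0*y0^3) * hx + (-9*a^3*x2*y2 + -9*a^3*x1*y1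 + -9*a^3*x0*y0) * hy + (9*b^3*u2*v2^3 + 9*b^3*u2*v1^2*v2 + 9*b^3*u2*v0^2*v2 + 9*b^3*u1*v1*v2^2 + 9*b^3*u1*v1^3 + 9*b^3*u1*v0^2*v1 + 9*b^3*u0*v0*v2^2 + 9*b^3*u0*v0*v1^2 + 9*b^3*u0*v0^3) * hu + (9*b^3*u2*v2 + 9*b^3*u1*v1 + 9*b^3*u0*v0) * hv
  obtain ⟨hab, hcd⟩ := inj_aux a b (x0*y0 + x1*y1 + x2*y2) (u0*v0 + u1*v1 + u2*v2) ha hb hc2 hcp2 hP hQ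
  refine ⟨hab, ?_⟩
  have s00 : x0*y0 = u0*v0 := by
    have h' : a * (x0*y0) = a * (u0*v0) := by
      linear_combination h00 + (a/3) * hcd - (u0*v0 - (u0*v0 + u1*v1 + u2*v2)/3) * hab
    exact mul_left_cancel₀ (ne_of_gt ha) h'
  have s11 : x1*y1 = u1*v1 := by
    have h' : a * (x1*y1) = a * (u1*v1) := by
      linear_combination h11 + (a/3) * hcd - (u1*v1 - (u0*v0 + u1*v1 + u2*v2)/3) * hab
    exact mul_left_cancel₀ (ne_of_gt ha) h'
  have s22 : x2*y2 = u2*v2 := by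
    have h' : a * (x2*y2) = a * (u2*v2) := by
      linear_combination h22 + (a/3) * hcd - (u2*v2 - (u0*v0 + u1*v1 + u2*v2)/3) * hab
    exact mul_left_cancel₀ (ne_of_gt ha) h'
  have s01 : x0*y1 + x1*y0 = u0*v1 + u1*v0 := by
    have h' : a * (x0*y1 + x1*y0) = a * (u0*v1 + u1*v0) := by
      linear_combination h01 - (u0*v1 + u1*v0) * hab
    exact mul_left_cancel₀ (ne_of_gt ha) h'
  have s02 : x0*y2 + x2*y0 = u0*v2 + u2*v0 := by
    have h' : a * (x0*y2 + x2*y0) = a * (u0*v2 + u2*v0) := by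
      linear_combination h02 - (u0*v2 + u2*v0) * hab
    exact mul_left_cancel₀ (ne_of_gt ha) h'
  have s12 : x1*y2 + x2*y1 = u1*v2 + u2*v1 := by
    have h' : a * (x1*y2 + x2*y1) = a * (u1*v2 + u2*v1) := by
      linear_combination h12 - (u1*v2 + u2*v1) * hab
    exact mul_left_cancel₀ (ne_of_gt ha) h'
  rcases lt_or_eq_of_le hc2 with hlt | heq
  · have hk : 1 - (x0*y0 + x1*y1 + x2*y2)^2 ≠ 0 := by intro h0; rw [sub_eq_zero] at h0; exact absurd h0.symm (ne_of_lt hlt)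
    have hA0 : u0 + (x0*y0 + x1*y1 + x2*y2)*v0 = (y0*v0 + y1*v1 + y2*v2)*x0 + (x0*v0 + x1*v1 + x2*v2)*y0 := by
      linear_combination -(2*v0) * s00 - (v1) * s01 - (v2) * s02 - u0 * hv + v0 * hcd
    have hB0 : v0 + (x0*y0 + x1*y1 + x2*y2)*u0 = (y0*u0 + y1*u1 + y2*u2)*x0 + (x0*u0 + x1*u1 + x2*u2)*y0 := by
      linear_combination -(2*u0) * s00 - (u1) * s01 - (u2) * s02 - v0 * hu + u0 * hcd
    have hA1 : u1 + (x0*y0 + x1*y1 + x2*y2)*v1 = (y0*v0 + y1*v1 + y2*v2)*x1 + (x0*v0 + x1*v1 + x2*v2)*y1 := by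
      linear_combination -(v0) * s01 - (2*v1) * s11 - (v2) * s12 - u1 * hv + v1 * hcd
    have hB1 : v1 + (x0*y0 + x1*y1 + x2*y2)*u1 = (y0*u0 + y1*u1 + y2*u2)*x1 + (x0*u0 + x1*u1 + x2*u2)*y1 := by
      linear_combination -(u0) * s01 - (2*u1) * s11 - (u2) * s12 - v1 * hu + u1 * hcd
    have hA2 : u2 + (x0*y0 + x1*y1 + x2*y2)*v2 = (y0*v0 + y1*v1 + y2*v2)*x2 + (x0*v0 + x1*v1 + x2*v2)*y2 := by
      linear_combination -(v0) * s02 - (v1) * s12 - (2*v2) * s22 - u2 * hv + v2 * hcd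
    have hB2 : v2 + (x0*y0 + x1*y1 + x2*y2)*u2 = (y0*u0 + y1*u1 + y2*u2)*x2 + (x0*u0 + x1*u1 + x2*u2)*y2 := by
      linear_combination -(u0) * s02 - (u1) * s12 - (2*u2) * s22 - v2 * hu + u2 * hcd
    have hu0 : (1 - (x0*y0 + x1*y1 + x2*y2)^2)*u0 = ((y0*v0 + y1*v1 + y2*v2) - (x0*y0 + x1*y1 + x2*y2)*(y0*u0 + y1*u1 + y2*u2))*x0 + ((x0*v0 + x1*v1 + x2*v2) - (x0*y0 + x1*y1 + x2*y2)*(x0*u0 + x1*u1 + x2*u2))*y0 := by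
      linear_combination hA0 - (x0*y0 + x1*y1 + x2*y2) * hB0
    have hv0 : (1 - (x0*y0 + x1*y1 + x2*y2)^2)*v0 = ((y0*u0 + y1*u1 + y2*u2) - (x0*y0 + x1*y1 + x2*y2)*(y0*v0 + y1*v1 + y2*v2))*x0 + ((x0*u0 + x1*u1 + x2*u2) - (x0*y0 + x1*y1 + x2*y2)*(x0*v0 + x1*v1 + x2*v2))*y0 := by
      linear_combination hB0 - (x0*y0 + x1*y1 + x2*y2) * hA0
    have hu1 : (1 - (x0*y0 + x1*y1 + x2*y2)^2)*u1 = ((y0*v0 + y1*v1 + y2*v2) - (x0*y0 + x1*y1 + x2*y2)*(y0*u0 + y1*u1 + y2*u2))*x1 + ((x0*v0 + x1*v1 + x2*v2) - (x0*y0 + x1*y1 + x2*y2)*(x0*u0 + x1*u1 + x2*u2))*y1 := by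
      linear_combination hA1 - (x0*y0 + x1*y1 + x2*y2) * hB1
    have hv1 : (1 - (x0*y0 + x1*y1 + x2*y2)^2)*v1 = ((y0*u0 + y1*u1 + y2*u2) - (x0*y0 + x1*y1 + x2*y2)*(y0*v0 + y1*v1 + y2*v2))*x1 + ((x0*u0 + x1*u1 + x2*u2) - (x0*y0 + x1*y1 + x2*y2)*(x0*v0 + x1*v1 + x2*v2))*y1 := by
      linear_combination hB1 - (x0*y0 + x1*y1 + x2*y2) * hA1
    have hu2 : (1 - (x0*y0 + x1*y1 + x2*y2)^2)*u2 = ((y0*v0 + y1*v1 + y2*v2) - (x0*y0 + x1*y1 + x2*y2)*(y0*u0 + y1*u1 + y2*u2))*x2 + ((x0*v0 + x1*v1 + x2*v2) - (x0*y0 + x1*y1 + x2*y2)*(x0*u0 + x1*u1 + x2*u2))*y2 := by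
      linear_combination hA2 - (x0*y0 + x1*y1 + x2*y2) * hB2
    have hv2 : (1 - (x0*y0 + x1*y1 + x2*y2)^2)*v2 = ((y0*u0 + y1*u1 + y2*u2) - (x0*y0 + x1*y1 + x2*y2)*(y0*v0 + y1*v1 + y2*v2))*x2 + ((x0*u0 + x1*u1 + x2*u2) - (x0*y0 + x1*y1 + x2*y2)*(x0*v0 + x1*v1 + x2*v2))*y2 := by
      linear_combination hB2 - (x0*y0 + x1*y1 + x2*y2) * hA2
    have E2 : (x0*u0 + x1*u1 + x2*u2)*(y0*v0 + y1*v1 + y2*v2) + (y0*u0 + y1*u1 + y2*u2)*(x0*v0 + x1*v1 + x2*v2) = 1 + (x0*y0 + x1*y1 + x2*y2)^2 := by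
      linear_combination -(2*x0*y0) * s00 - (2*x1*y1) * s11 - (2*x2*y2) * s22 - (x0*y1 + x1*y0) * s01 - (x0*y2 + x2*y0) * s02 - (x1*y2 + x2*y1) * s12 + (y0^2+y1^2+y2^2) * hx + hy
    have E4 : (x0*u0 + x1*u1 + x2*u2)*(y0*u0 + y1*u1 + y2*u2) = (x0*y0 + x1*y1 + x2*y2) := by
      linear_combination u0^2 * s00 + u1^2 * s11 + u2^2 * s22 + u0*u1 * s01 + u0*u2 * s02 + u1*u2 * s12 + (u0*v0 + u1*v1 + u2*v2) * hu - hcd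
    have E6 : (x0*u0 + x1*u1 + x2*u2) = (y0*v0 + y1*v1 + y2*v2) + (x0*y0 + x1*y1 + x2*y2)*(x0*v0 + x1*v1 + x2*v2) - (x0*y0 + x1*y1 + x2*y2)*(y0*u0 + y1*u1 + y2*u2) := by
      linear_combination x0 * hu0 + x1 * hu1 + x2 * hu2 + ((y0*v0 + y1*v1 + y2*v2) - (x0*y0 + x1*y1 + x2*y2)*(y0*u0 + y1*u1 + y2*u2)) * hx
    have E7 : (y0*u0 + y1*u1 + y2*u2) = (x0*v0 + x1*v1 + x2*v2) + (x0*y0 + x1*y1 + x2*y2)*(y0*v0 + y1*v1 + y2*v2) - (x0*y0 + x1*y1 + x2*y2)*(x0*u0 + x1*u1 + x2*u2) := by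
      linear_combination y0 * hu0 + y1 * hu1 + y2 * hu2 + ((x0*v0 + x1*v1 + x2*v2) - (x0*y0 + x1*y1 + x2*y2)*(x0*u0 + x1*u1 + x2*u2)) * hy
    have h8 : (1 - (x0*y0 + x1*y1 + x2*y2)^2)*((x0*u0 + x1*u1 + x2*u2) - (y0*v0 + y1*v1 + y2*v2)) = 0 := by linear_combination E6 - (x0*y0 + x1*y1 + x2*y2) * E7
    have had : (x0*u0 + x1*u1 + x2*u2) = (y0*v0 + y1*v1 + y2*v2) := by
      have := (mul_eq_zero.mp h8).resolve_left hk; linarith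
    have h9 : (1 - (x0*y0 + x1*y1 + x2*y2)^2)*((y0*u0 + y1*u1 + y2*u2) - (x0*v0 + x1*v1 + x2*v2)) = 0 := by linear_combination E7 - (x0*y0 + x1*y1 + x2*y2) * E6
    have hbg : (y0*u0 + y1*u1 + y2*u2) = (x0*v0 + x1*v1 + x2*v2) := by
      have := (mul_eq_zero.mp h9).resolve_left hk; linarith
    have hprod : ((x0*u0 + x1*u1 + x2*u2)^2 - 1)*((y0*u0 + y1*u1 + y2*u2)^2 - 1) = 0 := by
      linear_combination ((x0*u0 + x1*u1 + x2*u2)*(y0*u0 + y1*u1 + y2*u2) + (x0*y0 + x1*y1 + x2*y2)) * E4 - E2 - (x0*u0 + x1*u1 + x2*u2) * had - (y0*u0 + y1*u1 + y2*u2) * hbg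
    rcases mul_eq_zero.mp hprod with hals | hbes
    · have ha2 : (x0*u0 + x1*u1 + x2*u2)^2 = 1 := by linarith
      have hbeta : (y0*u0 + y1*u1 + y2*u2) = (x0*y0 + x1*y1 + x2*y2)*(x0*u0 + x1*u1 + x2*u2) := by linear_combination (x0*u0 + x1*u1 + x2*u2) * E4 - (y0*u0 + y1*u1 + y2*u2) * ha2
      have eu0 : u0 = (x0*u0 + x1*u1 + x2*u2)*x0 := by
        have h0 : (1 - (x0*y0 + x1*y1 + x2*y2)^2)*(u0 - (x0*u0 + x1*u1 + x2*u2)*x0) = 0 := by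
          linear_combination hu0 - x0 * had - y0 * hbg + (y0 - (x0*y0 + x1*y1 + x2*y2)*x0) * hbeta
        have := (mul_eq_zero.mp h0).resolve_left hk; linarith
      have ev0 : v0 = (x0*u0 + x1*u1 + x2*u2)*y0 := by
        have h0 : (1 - (x0*y0 + x1*y1 + x2*y2)^2)*(v0 - (x0*u0 + x1*u1 + x2*u2)*y0) = 0 := by
          linear_combination hv0 + (x0*y0 + x1*y1 + x2*y2)*x0 * had + (x0*y0 + x1*y1 + x2*y2)*y0 * hbg + (x0 - (x0*y0 + x1*y1 + x2*y2)*y0) * hbeta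
        have := (mul_eq_zero.mp h0).resolve_left hk; linarith
      have eu1 : u1 = (x0*u0 + x1*u1 + x2*u2)*x1 := by
        have h0 : (1 - (x0*y0 + x1*y1 + x2*y2)^2)*(u1 - (x0*u0 + x1*u1 + x2*u2)*x1) = 0 := by
          linear_combination hu1 - x1 * had - y1 * hbg + (y1 - (x0*y0 + x1*y1 + x2*y2)*x1) * hbeta
        have := (mul_eq_zero.mp h0).resolve_left hk; linarith
      have ev1 : v1 = (x0*u0 + x1*u1 + x2*u2)*y1 := by
        have h0 : (1 - (x0*y0 + x1*y1 + x2*y2)^2)*(v1 - (x0*u0 + x1*u1 + x2*u2)*y1) = 0 := by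
          linear_combination hv1 + (x0*y0 + x1*y1 + x2*y2)*x1 * had + (x0*y0 + x1*y1 + x2*y2)*y1 * hbg + (x1 - (x0*y0 + x1*y1 + x2*y2)*y1) * hbeta
        have := (mul_eq_zero.mp h0).resolve_left hk; linarith
      have eu2 : u2 = (x0*u0 + x1*u1 + x2*u2)*x2 := by
        have h0 : (1 - (x0*y0 + x1*y1 + x2*y2)^2)*(u2 - (x0*u0 + x1*u1 + x2*u2)*x2) = 0 := by
          linear_combination hu2 - x2 * had - y2 * hbg + (y2 - (x0*y0 + x1*y1 + x2*y2)*x2) * hbeta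
        have := (mul_eq_zero.mp h0).resolve_left hk; linarith
      have ev2 : v2 = (x0*u0 + x1*u1 + x2*u2)*y2 := by
        have h0 : (1 - (x0*y0 + x1*y1 + x2*y2)^2)*(v2 - (x0*u0 + x1*u1 + x2*u2)*y2) = 0 := by
          linear_combination hv2 + (x0*y0 + x1*y1 + x2*y2)*x2 * had + (x0*y0 + x1*y1 + x2*y2)*y2 * hbg + (x2 - (x0*y0 + x1*y1 + x2*y2)*y2) * hbeta
        have := (mul_eq_zero.mp h0).resolve_left hk; linarith
      have hpm : ((x0*u0 + x1*u1 + x2*u2) - 1)*((x0*u0 + x1*u1 + x2*u2) + 1) = 0 := by linear_combination ha2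
      rcases mul_eq_zero.mp hpm with hcase | hcase
      · refine Or.inl ⟨?_, ?_, ?_, ?_, ?_, ?_⟩
        · linear_combination eu0 + x0 * hcase
        · linear_combination eu1 + x1 * hcase
        · linear_combination eu2 + x2 * hcase
        · linear_combination ev0 + y0 * hcase
        · linear_combination ev1 + y1 * hcase
        · linear_combination ev2 + y2 * hcase
      · refine Or.inr (Or.inr (Or.inl ⟨?_, ?_, ?_, ?_, ?_, ?_⟩))
        · linear_combination eu0 + x0 * hcase
        · linear_combination eu1 + x1 * hcase
        · linear_combination eu2 + x2 * hcase
        · linear_combination ev0 + y0 * hcase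
        · linear_combination ev1 + y1 * hcase
        · linear_combination ev2 + y2 * hcase
    · have hb2 : (y0*u0 + y1*u1 + y2*u2)^2 = 1 := by linarith
      have halpha : (x0*u0 + x1*u1 + x2*u2) = (x0*y0 + x1*y1 + x2*y2)*(y0*u0 + y1*u1 + y2*u2) := by linear_combination (y0*u0 + y1*u1 + y2*u2) * E4 - (x0*u0 + x1*u1 + x2*u2) * hb2
      have eu0 : u0 = (y0*u0 + y1*u1 + y2*u2)*y0 := by
        have h0 : (1 - (x0*y0 + x1*y1 + x2*y2)^2)*(u0 - (y0*u0 + y1*u1 + y2*u2)*y0) = 0 := by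
          linear_combination hu0 - x0 * had - y0 * hbg + (x0 - (x0*y0 + x1*y1 + x2*y2)*y0) * halpha
        have := (mul_eq_zero.mp h0).resolve_left hk; linarith
      have ev0 : v0 = (y0*u0 + y1*u1 + y2*u2)*x0 := by
        have h0 : (1 - (x0*y0 + x1*y1 + x2*y2)^2)*(v0 - (y0*u0 + y1*u1 + y2*u2)*x0) = 0 := by
          linear_combination hv0 + (x0*y0 + x1*y1 + x2*y2)*x0 * had + (x0*y0 + x1*y1 + x2*y2)*y0 * hbg + (y0 - (x0*y0 + x1*y1 + x2*y2)*x0) * halpha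
        have := (mul_eq_zero.mp h0).resolve_left hk; linarith
      have eu1 : u1 = (y0*u0 + y1*u1 + y2*u2)*y1 := by
        have h0 : (1 - (x0*y0 + x1*y1 + x2*y2)^2)*(u1 - (y0*u0 + y1*u1 + y2*u2)*y1) = 0 := by
          linear_combination hu1 - x1 * had - y1 * hbg + (x1 - (x0*y0 + x1*y1 + x2*y2)*y1) * halpha
        have := (mul_eq_zero.mp h0).resolve_left hk; linarith
      have ev1 : v1 = (y0*u0 + y1*u1 + y2*u2)*x1 := by
        have h0 : (1 - (x0*y0 + x1*y1 + x2*y2)^2)*(v1 - (y0*u0 + y1*u1 + y2*u2)*x1) = 0 := by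
          linear_combination hv1 + (x0*y0 + x1*y1 + x2*y2)*x1 * had + (x0*y0 + x1*y1 + x2*y2)*y1 * hbg + (y1 - (x0*y0 + x1*y1 + x2*y2)*x1) * halpha
        have := (mul_eq_zero.mp h0).resolve_left hk; linarith
      have eu2 : u2 = (y0*u0 + y1*u1 + y2*u2)*y2 := by
        have h0 : (1 - (x0*y0 + x1*y1 + x2*y2)^2)*(u2 - (y0*u0 + y1*u1 + y2*u2)*y2) = 0 := by
          linear_combination hu2 - x2 * had - y2 * hbg + (x2 - (x0*y0 + x1*y1 + x2*y2)*y2) * halpha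
        have := (mul_eq_zero.mp h0).resolve_left hk; linarith
      have ev2 : v2 = (y0*u0 + y1*u1 + y2*u2)*x2 := by
        have h0 : (1 - (x0*y0 + x1*y1 + x2*y2)^2)*(v2 - (y0*u0 + y1*u1 + y2*u2)*x2) = 0 := by
          linear_combination hv2 + (x0*y0 + x1*y1 + x2*y2)*x2 * had + (x0*y0 + x1*y1 + x2*y2)*y2 * hbg + (y2 - (x0*y0 + x1*y1 + x2*y2)*x2) * halpha
        have := (mul_eq_zero.mp h0).resolve_left hk; linarith
      have hpm : ((y0*u0 + y1*u1 + y2*u2) - 1)*((y0*u0 + y1*u1 + y2*u2) + 1) = 0 := by linear_combination hb2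
      rcases mul_eq_zero.mp hpm with hcase | hcase
      · refine Or.inr (Or.inl ⟨?_, ?_, ?_, ?_, ?_, ?_⟩)
        · linear_combination eu0 + y0 * hcase
        · linear_combination eu1 + y1 * hcase
        · linear_combination eu2 + y2 * hcase
        · linear_combination ev0 + x0 * hcase
        · linear_combination ev1 + x1 * hcase
        · linear_combination ev2 + x2 * hcase
      · refine Or.inr (Or.inr (Or.inr ⟨?_, ?_, ?_, ?_, ?_, ?_⟩))
        · linear_combination eu0 + y0 * hcase
        · linear_combination eu1 + y1 * hcase
        · linear_combination eu2 + y2 * hcase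
        · linear_combination ev0 + x0 * hcase
        · linear_combination ev1 + x1 * hcase
        · linear_combination ev2 + x2 * hcase
  · have hpm1 : ((x0*y0 + x1*y1 + x2*y2) - 1)*((x0*y0 + x1*y1 + x2*y2) + 1) = 0 := by linear_combination heq
    rcases mul_eq_zero.mp hpm1 with hc1 | hc1
    · have hceq : (x0*y0 + x1*y1 + x2*y2) = 1 := by linarith
      obtain ⟨e0, e1, e2⟩ := sq3 (p := x0 - y0) (q := x1 - y1) (r := x2 - y2)
        (by linear_combination hx + hy - 2 * hceq)
      have f0 : y0 = x0 := by linarith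
      have f1 : y1 = x1 := by linarith
      have f2 : y2 = x2 := by linarith
      subst y0; subst y1; subst y2
      have hcpeq : (u0*v0 + u1*v1 + u2*v2) = 1 := by linear_combination hceq - hcd
      obtain ⟨g0, g1, g2⟩ := sq3 (p := u0 - v0) (q := u1 - v1) (r := u2 - v2)
        (by linear_combination hu + hv - 2 * hcpeq)
      have f0 : v0 = u0 := by linarith
      have f1 : v1 = u1 := by linarith
      have f2 : v2 = u2 := by linarith
      subst v0; subst v1; subst v2
      have q00 : x0*x0 = u0*u0 := by linear_combination s00
      have q11 : x1*x1 = u1*u1 := by linear_combination s11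
      have q22 : x2*x2 = u2*u2 := by linear_combination s22
      have q01 : x0*x1 = u0*u1 := by linear_combination s01/2
      have q02 : x0*x2 = u0*u2 := by linear_combination s02/2
      have q12 : x1*x2 = u1*u2 := by linear_combination s12/2
      have ht2 : (x0*u0 + x1*u1 + x2*u2)^2 = 1 := by
        linear_combination u0^2 * q00 + u1^2 * q11 + u2^2 * q22 + 2*u0*u1 * q01 + 2*u0*u2 * q02 + 2*u1*u2 * q12 + (u0^2+u1^2+u2^2+1) * hu
      have hw0 : u0 = (x0*u0 + x1*u1 + x2*u2)*x0 := by
        linear_combination -(u0 * q00) - u1 * q01 - u2 * q02 - u0 * hu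
      have hw1 : u1 = (x0*u0 + x1*u1 + x2*u2)*x1 := by
        linear_combination -(u0 * q01) - u1 * q11 - u2 * q12 - u1 * hu
      have hw2 : u2 = (x0*u0 + x1*u1 + x2*u2)*x2 := by
        linear_combination -(u0 * q02) - u1 * q12 - u2 * q22 - u2 * hu
      have hpm2 : ((x0*u0 + x1*u1 + x2*u2) - 1)*((x0*u0 + x1*u1 + x2*u2) + 1) = 0 := by linear_combination ht2
      rcases mul_eq_zero.mp hpm2 with ht | ht
      · have p0 : u0 = x0 := by linear_combination hw0 + x0 * ht
        have p1 : u1 = x1 := by linear_combination hw1 + x1 * ht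
        have p2 : u2 = x2 := by linear_combination hw2 + x2 * ht
        exact Or.inl ⟨p0, p1, p2, p0, p1, p2⟩
      · have p0 : u0 = -x0 := by linear_combination hw0 + x0 * ht
        have p1 : u1 = -x1 := by linear_combination hw1 + x1 * ht
        have p2 : u2 = -x2 := by linear_combination hw2 + x2 * ht
        exact Or.inr (Or.inr (Or.inl ⟨p0, p1, p2, p0, p1, p2⟩))
    · have hceq : (x0*y0 + x1*y1 + x2*y2) = -1 := by linarith
      obtain ⟨e0, e1, e2⟩ := sq3 (p := x0 + y0) (q := x1 + y1) (r := x2 + y2)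
        (by linear_combination hx + hy + 2 * hceq)
      have f0 : y0 = -x0 := by linarith
      have f1 : y1 = -x1 := by linarith
      have f2 : y2 = -x2 := by linarith
      subst f0; subst f1; subst f2
      have hcpeq : (u0*v0 + u1*v1 + u2*v2) = -1 := by linear_combination hceq - hcd
      obtain ⟨g0, g1, g2⟩ := sq3 (p := u0 + v0) (q := u1 + v1) (r := u2 + v2)
        (by linear_combination hu + hv + 2 * hcpeq)
      have f0 : v0 = -u0 := by linarith
      have f1 : v1 = -u1 := by linarith
      have f2 : v2 = -u2 := by linarith
      subst f0; subst f1; subst f2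
      have q00 : x0*x0 = u0*u0 := by linear_combination -s00
      have q11 : x1*x1 = u1*u1 := by linear_combination -s11
      have q22 : x2*x2 = u2*u2 := by linear_combination -s22
      have q01 : x0*x1 = u0*u1 := by linear_combination -s01/2
      have q02 : x0*x2 = u0*u2 := by linear_combination -s02/2
      have q12 : x1*x2 = u1*u2 := by linear_combination -s12/2
      have ht2 : (x0*u0 + x1*u1 + x2*u2)^2 = 1 := by
        linear_combination u0^2 * q00 + u1^2 * q11 + u2^2 * q22 + 2*u0*u1 * q01 + 2*u0*u2 * q02 + 2*u1*u2 * q12 + (u0^2+u1^2+u2^2+1) * hu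
      have hw0 : u0 = (x0*u0 + x1*u1 + x2*u2)*x0 := by
        linear_combination -(u0 * q00) - u1 * q01 - u2 * q02 - u0 * hu
      have hw1 : u1 = (x0*u0 + x1*u1 + x2*u2)*x1 := by
        linear_combination -(u0 * q01) - u1 * q11 - u2 * q12 - u1 * hu
      have hw2 : u2 = (x0*u0 + x1*u1 + x2*u2)*x2 := by
        linear_combination -(u0 * q02) - u1 * q12 - u2 * q22 - u2 * hu
      have hpm2 : ((x0*u0 + x1*u1 + x2*u2) - 1)*((x0*u0 + x1*u1 + x2*u2) + 1) = 0 := by linear_combination ht2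
      rcases mul_eq_zero.mp hpm2 with ht | ht
      · have p0 : u0 = x0 := by linear_combination hw0 + x0 * ht
        have p1 : u1 = x1 := by linear_combination hw1 + x1 * ht
        have p2 : u2 = x2 := by linear_combination hw2 + x2 * ht
        exact Or.inl ⟨p0, p1, p2, by linear_combination -p0, by linear_combination -p1, by linear_combination -p2⟩
      · have p0 : u0 = -x0 := by linear_combination hw0 + x0 * ht
        have p1 : u1 = -x1 := by linear_combination hw1 + x1 * ht
        have p2 : u2 = -x2 := by linear_combination hw2 + x2 * ht
        exact Or.inr (Or.inr (Or.inl ⟨p0, p1, p2, by linear_combination -p0, by linear_combination -p1, by linear_combination -p2⟩))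

/-- Uniqueness of the multipole representation of a nonzero second-order deviator:
the amplitude `a > 0` is unique, and the pair of unit multipoles is unique up to
swapping and an even number of sign changes. -/
theorem multipole_representation_unique (D : Matrix (Fin 3) (Fin 3) ℝ)
    (hD : D ≠ 0)
    (a a' : ℝ) (n₁ n₂ n₁' n₂' : Fin 3 → ℝ)
    (ha : 0 < a) (ha' : 0 < a')
    (hn₁ : ∑ i, n₁ i ^ 2 = 1) (hn₂ : ∑ i, n₂ i ^ 2 = 1)
    (hn₁' : ∑ i, n₁' i ^ 2 = 1) (hn₂' : ∑ i, n₂' i ^ 2 = 1)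
    (hrep : D = a • devOuter n₁ n₂) (hrep' : D = a' • devOuter n₁' n₂') :
    a = a' ∧
    ((n₁' = n₁ ∧ n₂' = n₂) ∨ (n₁' = n₂ ∧ n₂' = n₁) ∨
     (n₁' = -n₁ ∧ n₂' = -n₂) ∨ (n₁' = -n₂ ∧ n₂' = -n₁)) := by
  have hx : n₁ 0 ^ 2 + n₁ 1 ^ 2 + n₁ 2 ^ 2 = 1 := by simpa [Fin.sum_univ_three] using hn₁
  have hy : n₂ 0 ^ 2 + n₂ 1 ^ 2 + n₂ 2 ^ 2 = 1 := by simpa [Fin.sum_univ_three] using hn₂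
  have hu : n₁' 0 ^ 2 + n₁' 1 ^ 2 + n₁' 2 ^ 2 = 1 := by simpa [Fin.sum_univ_three] using hn₁'
  have hv : n₂' 0 ^ 2 + n₂' 1 ^ 2 + n₂' 2 ^ 2 = 1 := by simpa [Fin.sum_univ_three] using hn₂'
  have hE : a • devOuter n₁ n₂ = a' • devOuter n₁' n₂' := hrep.symm.trans hrep'
  have k00 := congrFun (congrFun hE 0) 0
  simp only [devOuter, Matrix.smul_apply, Matrix.sub_apply, Matrix.add_apply,
    Matrix.vecMulVec_apply, Matrix.one_apply, Fin.sum_univ_three, smul_eq_mul,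
    Fin.isValue, Fin.reduceEq, if_true, if_false, reduceIte, mul_one, mul_zero, sub_zero,
    one_ne_zero] at k00
  have h00 : a * (n₁ 0 * n₂ 0 - (n₁ 0 * n₂ 0 + n₁ 1 * n₂ 1 + n₁ 2 * n₂ 2)/3) = a' * (n₁' 0 * n₂' 0 - (n₁' 0 * n₂' 0 + n₁' 1 * n₂' 1 + n₁' 2 * n₂' 2)/3) := by
    linear_combination k00
  have k11 := congrFun (congrFun hE 1) 1
  simp only [devOuter, Matrix.smul_apply, Matrix.sub_apply, Matrix.add_apply,
    Matrix.vecMulVec_apply, Matrix.one_apply, Fin.sum_univ_three, smul_eq_mul,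
    Fin.isValue, Fin.reduceEq, if_true, if_false, reduceIte, mul_one, mul_zero, sub_zero,
    one_ne_zero] at k11
  have h11 : a * (n₁ 1 * n₂ 1 - (n₁ 0 * n₂ 0 + n₁ 1 * n₂ 1 + n₁ 2 * n₂ 2)/3) = a' * (n₁' 1 * n₂' 1 - (n₁' 0 * n₂' 0 + n₁' 1 * n₂' 1 + n₁' 2 * n₂' 2)/3) := by
    linear_combination k11
  have k22 := congrFun (congrFun hE 2) 2
  simp only [devOuter, Matrix.smul_apply, Matrix.sub_apply, Matrix.add_apply,
    Matrix.vecMulVec_apply, Matrix.one_apply, Fin.sum_univ_three, smul_eq_mul,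
    Fin.isValue, Fin.reduceEq, if_true, if_false, reduceIte, mul_one, mul_zero, sub_zero,
    one_ne_zero] at k22
  have h22 : a * (n₁ 2 * n₂ 2 - (n₁ 0 * n₂ 0 + n₁ 1 * n₂ 1 + n₁ 2 * n₂ 2)/3) = a' * (n₁' 2 * n₂' 2 - (n₁' 0 * n₂' 0 + n₁' 1 * n₂' 1 + n₁' 2 * n₂' 2)/3) := by
    linear_combination k22
  have k01 := congrFun (congrFun hE 0) 1
  simp only [devOuter, Matrix.smul_apply, Matrix.sub_apply, Matrix.add_apply,
    Matrix.vecMulVec_apply, Matrix.one_apply, Fin.sum_univ_three, smul_eq_mul,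
    Fin.isValue, Fin.reduceEq, if_true, if_false, reduceIte, mul_one, mul_zero, sub_zero,
    one_ne_zero] at k01
  have h01 : a * (n₁ 0 * n₂ 1 + n₁ 1 * n₂ 0) = a' * (n₁' 0 * n₂' 1 + n₁' 1 * n₂' 0) := by
    linear_combination 2 * k01
  have k02 := congrFun (congrFun hE 0) 2
  simp only [devOuter, Matrix.smul_apply, Matrix.sub_apply, Matrix.add_apply,
    Matrix.vecMulVec_apply, Matrix.one_apply, Fin.sum_univ_three, smul_eq_mul,
    Fin.isValue, Fin.reduceEq, if_true, if_false, reduceIte, mul_one, mul_zero, sub_zero,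
    one_ne_zero] at k02
  have h02 : a * (n₁ 0 * n₂ 2 + n₁ 2 * n₂ 0) = a' * (n₁' 0 * n₂' 2 + n₁' 2 * n₂' 0) := by
    linear_combination 2 * k02
  have k12 := congrFun (congrFun hE 1) 2
  simp only [devOuter, Matrix.smul_apply, Matrix.sub_apply, Matrix.add_apply,
    Matrix.vecMulVec_apply, Matrix.one_apply, Fin.sum_univ_three, smul_eq_mul,
    Fin.isValue, Fin.reduceEq, if_true, if_false, reduceIte, mul_one, mul_zero, sub_zero,
    one_ne_zero] at k12
  have h12 : a * (n₁ 1 * n₂ 2 + n₁ 2 * n₂ 1) = a' * (n₁' 1 * n₂' 2 + n₁' 2 * n₂' 1) := by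
    linear_combination 2 * k12
  obtain ⟨hab, hcase⟩ := key a a' (n₁ 0) (n₁ 1) (n₁ 2) (n₂ 0) (n₂ 1) (n₂ 2)
    (n₁' 0) (n₁' 1) (n₁' 2) (n₂' 0) (n₂' 1) (n₂' 2) ha ha' hx hy hu hv h00 h11 h22 h01 h02 h12
  refine ⟨hab, ?_⟩
  rcases hcase with ⟨p0, p1, p2, r0, r1, r2⟩ | ⟨p0, p1, p2, r0, r1, r2⟩ | ⟨p0, p1, p2, r0, r1, r2⟩ | ⟨p0, p1, p2, r0, r1, r2⟩
  · exact Or.inl ⟨funext fun i => by fin_cases i <;> assumption,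
      funext fun i => by fin_cases i <;> assumption⟩
  · exact Or.inr (Or.inl ⟨funext fun i => by fin_cases i <;> assumption,
      funext fun i => by fin_cases i <;> assumption⟩)
  · refine Or.inr (Or.inr (Or.inl ⟨funext fun i => ?_, funext fun i => ?_⟩))
    · fin_cases i <;> simp only [Pi.neg_apply] <;> first | exact p0 | exact p1 | exact p2
    · fin_cases i <;> simp only [Pi.neg_apply] <;> first | exact r0 | exact r1 | exact r2
  · refine Or.inr (Or.inr (Or.inr ⟨funext fun i => ?_, funext fun i => ?_⟩))
    · fin_cases i <;> simp only [Pi.neg_apply] <;> first | exact p0 | exact p1 | exact p2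
    · fin_cases i <;> simp only [Pi.neg_apply] <;> first | exact r0 | exact r1 | exact r2
end

section
/- Let D = diag(λ₁, λ₂, −λ₁−λ₂) be a traceless diagonal 3×3 matrix with 2λ₁+λ₂ ≥ 0 and −λ₁−2λ₂ ≥ 0, and set a = λ₁ − λ₂ > 0. Then D = a⌊m₁⊗m₂⌋, where m₁ = (√((2λ₁+λ₂)/a), √((−λ₁−2λ₂)/a), 0)ᵀ and m₂ = (√((2λ₁+λ₂)/a), −√((−λ₁−2λ₂)/a), 0)ᵀ; in particular m₁ and m₂ are unit vectors and the eigenvectors e₁ and e₂ are the bisectors of the multipole pair. -/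
open Finset Matrix

/-- Explicit multipoles of the traceless diagonal matrix `diag(λ₁, λ₂, −λ₁−λ₂)`:
with `a = λ₁ − λ₂ > 0`, `D = a⌊m₁⊗m₂⌋` for the given unit vectors `m₁, m₂`, and the
eigenvectors `e₁, e₂` are the bisectors of the multipole pair. -/
theorem multipoles_distinct_eigenvalues (l1 l2 : ℝ)
    (h1 : 0 ≤ 2 * l1 + l2) (h2 : 0 ≤ -l1 - 2 * l2) (ha : 0 < l1 - l2) :
    let a : ℝ := l1 - l2
    let D : Matrix (Fin 3) (Fin 3) ℝ := Matrix.diagonal ![l1, l2, -l1 - l2]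
    let m₁ : Fin 3 → ℝ := ![Real.sqrt ((2 * l1 + l2) / a), Real.sqrt ((-l1 - 2 * l2) / a), 0]
    let m₂ : Fin 3 → ℝ := ![Real.sqrt ((2 * l1 + l2) / a), -Real.sqrt ((-l1 - 2 * l2) / a), 0]
    (∑ i, m₁ i ^ 2 = 1) ∧ (∑ i, m₂ i ^ 2 = 1) ∧
    D = a • devOuter m₁ m₂ ∧
    -- e₁ and e₂ bisect the multipole pair
    (fun i => m₁ i + m₂ i) =
      (fun i => 2 * Real.sqrt ((2 * l1 + l2) / a) * (![1, 0, 0] : Fin 3 → ℝ) i) ∧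
    (fun i => m₁ i - m₂ i) =
      (fun i => 2 * Real.sqrt ((-l1 - 2 * l2) / a) * (![0, 1, 0] : Fin 3 → ℝ) i) := by
  intro a D m₁ m₂
  have hs : Real.sqrt ((2 * l1 + l2) / a) ^ 2 = (2 * l1 + l2) / a :=
    Real.sq_sqrt (div_nonneg h1 ha.le)
  have ht : Real.sqrt ((-l1 - 2 * l2) / a) ^ 2 = (-l1 - 2 * l2) / a :=
    Real.sq_sqrt (div_nonneg h2 ha.le)
  have hss : Real.sqrt ((2 * l1 + l2) / a) * Real.sqrt ((2 * l1 + l2) / a) = (2 * l1 + l2) / a :=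
    Real.mul_self_sqrt (div_nonneg h1 ha.le)
  have htt : Real.sqrt ((-l1 - 2 * l2) / a) * Real.sqrt ((-l1 - 2 * l2) / a) = (-l1 - 2 * l2) / a :=
    Real.mul_self_sqrt (div_nonneg h2 ha.le)
  have hane : a ≠ 0 := ne_of_gt ha
  refine ⟨?_, ?_, ?_, ?_, ?_⟩
  · simp [m₁, Fin.sum_univ_three, hs, ht]
    field_simp
    ring
  · simp [m₂, Fin.sum_univ_three, hs, ht]
    field_simp
    ring
  · have hdot : (∑ i, m₁ i * m₂ i) = (3 * l1 + 3 * l2) / a := by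
      simp [m₁, m₂, Fin.sum_univ_three, hss, htt]
      field_simp
      ring
    ext i j
    simp only [devOuter, hdot]
    fin_cases i <;> fin_cases j <;>
      simp [D, m₁, m₂, Matrix.diagonal, Matrix.vecMulVec, Matrix.one_apply,
        Matrix.smul_apply, Matrix.sub_apply, Matrix.add_apply, hss, htt] <;>
      field_simp <;> ring
  · funext i; fin_cases i <;> simp [m₁, m₂] <;> ring
  · funext i; fin_cases i <;> simp [m₁, m₂] <;> ring
end
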